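/- The series ∑_{k=2}^∞ (ζ(k) − 1) converges and equals 1 (Goldbach's theorem). -/

import Mathlib

/-- The Riemann zeta function at a natural argument, `ζ(s) = ∑_{n=1}^∞ 1/n^s`. -/
noncomputable def zetaNat (s : ℕ) : ℝ := ∑' n : ℕ, 1 / ((n : ℝ) + 1) ^ s

lemma telescoping : HasSum (fun n : ℕ => 1 / (((n : ℝ) + 1) * ((n : ℝ) + 2))) 1 := by
  have h : ∀ n : ℕ, 1 / (((n : ℝ) + 1) * ((n : ℝ) + 2)) =
      1 / ((n : ℝ) + 1) - 1 / ((n : ℝ) + 2) := by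
    intro n
    have h1 : ((n : ℝ) + 1) ≠ 0 := by positivity
    have h2 : ((n : ℝ) + 2) ≠ 0 := by positivity
    field_simp
    ring
  rw [hasSum_iff_tendsto_nat_of_nonneg (fun n => by positivity)]
  have key : ∀ N : ℕ, ∑ n ∈ Finset.range N, 1 / (((n : ℝ) + 1) * ((n : ℝ) + 2)) =
      1 - 1 / ((N : ℝ) + 1) := by
    intro N
    have := Finset.sum_range_sub' (f := fun n : ℕ => 1 / ((n : ℝ) + 1)) N
    simp only [h]
    rw [show (fun n : ℕ => 1 / ((n : ℝ) + 1) - 1 / ((n : ℝ) + 2)) =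
        (fun n : ℕ => 1 / ((n : ℝ) + 1) - 1 / (((n + 1 : ℕ) : ℝ) + 1)) by
      funext n; push_cast; ring_nf]
    rw [this]
    norm_num
  simp only [key]
  have : Filter.Tendsto (fun N : ℕ => 1 / ((N : ℝ) + 1)) Filter.atTop (nhds 0) :=
    tendsto_one_div_add_atTop_nhds_zero_nat
  simpa using Filter.Tendsto.const_sub 1 this

/-- geometric fiber: for fixed n, sum over k. -/
lemma geomFiber (n : ℕ) :
    HasSum (fun k : ℕ => 1 / ((n : ℝ) + 2) ^ (k + 2))
      (1 / (((n : ℝ) + 1) * ((n : ℝ) + 2))) := by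
  set r : ℝ := 1 / ((n : ℝ) + 2) with hr
  have h2 : (0 : ℝ) < (n : ℝ) + 2 := by positivity
  have hr0 : 0 ≤ r := by positivity
  have hr1 : r < 1 := by
    rw [hr, div_lt_one h2]; linarith
  have := (hasSum_geometric_of_lt_one hr0 hr1).mul_left (r ^ 2)
  have heq : (fun k : ℕ => r ^ 2 * r ^ k) = fun k : ℕ => 1 / ((n : ℝ) + 2) ^ (k + 2) := by
    funext k
    rw [hr]
    rw [div_pow, div_pow, one_pow, one_pow, div_mul_div_comm, one_mul, ← pow_add]
    ring_nf
  rw [heq] at this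
  convert this using 1
  · rfl
  have h1 : ((n : ℝ) + 1) ≠ 0 := by positivity
  have h3 : (1:ℝ) - r = ((n:ℝ)+1)/((n:ℝ)+2) := by rw [hr]; field_simp; ring
  rw [h3, hr, inv_div]
  field_simp

lemma zetaSummable (s : ℕ) (hs : 2 ≤ s) : Summable (fun n : ℕ => 1 / ((n : ℝ) + 1) ^ s) := by
  have := (summable_nat_add_iff 1).2 (Real.summable_one_div_nat_pow.2 hs)
  simpa using this

lemma zetaFiber (k : ℕ) :
    HasSum (fun n : ℕ => 1 / ((n : ℝ) + 2) ^ (k + 2)) (zetaNat (k + 2) - 1) := by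
  have hsum : Summable (fun n : ℕ => 1 / ((n : ℝ) + 1) ^ (k + 2)) :=
    zetaSummable (k + 2) (by omega)
  have hz : HasSum (fun n : ℕ => 1 / ((n : ℝ) + 1) ^ (k + 2)) (zetaNat (k + 2)) :=
    hsum.hasSum
  have := (hasSum_nat_add_iff (f := fun n : ℕ => 1 / ((n : ℝ) + 1) ^ (k + 2))
      (g := zetaNat (k + 2) - 1) 1).2
  have h0 : zetaNat (k + 2) - 1 + ∑ i ∈ Finset.range 1,
      1 / ((i : ℝ) + 1) ^ (k + 2) = zetaNat (k + 2) := by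
    simp
  rw [h0] at this
  have h2 := this hz
  convert h2 using 2 with n
  · rfl
  push_cast
  ring_nf

/-- Goldbach's theorem: `∑_{k=2}^∞ (ζ(k) − 1) = 1`. -/
theorem goldbach : HasSum (fun k : ℕ => zetaNat (k + 2) - 1) 1 := by
  set f : ℕ × ℕ → ℝ := fun p => 1 / ((p.2 : ℝ) + 2) ^ (p.1 + 2) with hf
  have hnonneg : ∀ p : ℕ × ℕ, 0 ≤ (f ∘ ⇑(Equiv.prodComm ℕ ℕ)) p := fun p => by
    simp only [hf, Function.comp]; positivity
  have hswap : Summable (f ∘ ⇑(Equiv.prodComm ℕ ℕ)) := by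
    rw [summable_prod_of_nonneg hnonneg]
    constructor
    · intro n
      exact (geomFiber n).summable
    · apply Summable.congr telescoping.summable
      intro n
      exact ((geomFiber n).tsum_eq).symm
  have hfsummable : Summable f := (Equiv.prodComm ℕ ℕ).summable_iff.1 hswap
  obtain ⟨S, hS⟩ := hfsummable
  have hSswap : HasSum (f ∘ ⇑(Equiv.prodComm ℕ ℕ)) S := (Equiv.prodComm ℕ ℕ).hasSum_iff.2 hS
  have hfib : HasSum (fun n : ℕ => 1 / (((n : ℝ) + 1) * ((n : ℝ) + 2))) S :=
    hSswap.prod_fiberwise (fun n => geomFiber n)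
  have hS1 : S = 1 := hfib.unique telescoping
  subst hS1
  exact hS.prod_fiberwise (fun k => zetaFiber k)
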